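/- Let (A_n)_{n∈ℕ} be a partition of ℕ whose pieces' cardinalities |A_n| tend to infinity (the A_n may be infinite), and let I = {B ⊆ ℕ : sup_n |A_n ∩ B| < ∞} be the associated ideal on ℕ, with dual filter F = {C ⊆ ℕ : ℕ \ C ∈ I}. Then I is a Lebesgue ideal: for every finite (positive) measure space (Ω, Σ, μ), every integrable function g ≥ 0 on Ω, and every sequence (f_n) of measurable real-valued functions on Ω with |f_n| ≤ g pointwise, if for every x ∈ Ω the sequence (f_n(x)) converges to 0 along the filter F, then the sequence of integrals (∫_Ω f_n dμ) converges to 0 along F. -/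

import Mathlib

open MeasureTheory Filter

/-- Let `(A n)` be a partition of `ℕ` whose pieces' cardinalities tend to
infinity (pieces may be infinite), and let `I = {B ⊆ ℕ : sup_n |A n ∩ B| < ∞}` be the
associated ideal, with dual filter `F`. Then `I` is a Lebesgue ideal: for every finite
measure space, every integrable dominating function `g ≥ 0` and every sequence `(f n)` of
measurable functions with `|f n| ≤ g` pointwise that converges pointwise to `0` along `F`
(i.e. for every `x` and `ε > 0` the set `{m : |f m x| ≥ ε}` is in `I`), the integrals
`∫ f n dμ` converge to `0` along `F` (i.e. for every `ε > 0`, `{m : |∫ f m dμ| ≥ ε} ∈ I`). -/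
theorem stmt10 (A : ℕ → Set ℕ)
    (hdis : Pairwise (Function.onFun Disjoint A)) (hcov : (⋃ n, A n) = Set.univ)
    (hcard : ∀ k : ℕ, ∃ m : ℕ, ∀ n ≥ m, (k : ℕ∞) ≤ (A n).encard)
    (Ω : Type) [MeasurableSpace Ω] (μ : Measure Ω) [IsFiniteMeasure μ]
    (g : Ω → ℝ) (hg : Integrable g μ) (hg0 : ∀ x, 0 ≤ g x)
    (f : ℕ → Ω → ℝ) (hf : ∀ n, Measurable (f n)) (hdom : ∀ n x, |f n x| ≤ g x)
    (hpt : ∀ x : Ω, ∀ ε : ℝ, 0 < ε →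
      ∃ k : ℕ, ∀ n, (A n ∩ {m | ε ≤ |f m x|}).encard ≤ (k : ℕ∞)) :
    ∀ ε : ℝ, 0 < ε →
      ∃ k : ℕ, ∀ n, (A n ∩ {m | ε ≤ |∫ y, f m y ∂μ|}).encard ≤ (k : ℕ∞) := by
  classical
  intro ε hε
  by_contra hcon
  push_neg at hcon
  set S : Set ℕ := {m | ε ≤ |∫ y, f m y ∂μ|} with hSdef
  -- choose finite subsets of size j+1
  have hpick : ∀ j : ℕ, ∃ b : Finset ℕ, b.card = j + 1 ∧ ∃ n, (b : Set ℕ) ⊆ A n ∩ S := by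
    intro j
    obtain ⟨n, hn⟩ := hcon (j + 1)
    obtain ⟨t, ht, htc⟩ := Set.exists_subset_encard_eq (le_of_lt (by exact_mod_cast hn))
    have htf : t.Finite := Set.finite_of_encard_eq_coe htc
    refine ⟨htf.toFinset, ?_, n, by simpa using ht⟩
    have : t.encard = (htf.toFinset.card : ℕ∞) := htf.encard_eq_coe_toFinset_card
    rw [this] at htc
    exact_mod_cast htc
  choose B hBcard n hBsub using hpick
  set s : ℕ → ℝ := fun m => if 0 ≤ ∫ y, f m y ∂μ then 1 else -1 with hsdef
  have hsabs : ∀ m, |s m| = 1 := by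
    intro m; simp only [hsdef]; split <;> simp
  have hsint : ∀ m, s m * ∫ y, f m y ∂μ = |∫ y, f m y ∂μ| := by
    intro m; simp only [hsdef]; split
    · rw [abs_of_nonneg ‹_›]; ring
    · rw [abs_of_neg (lt_of_not_ge ‹_›)]; ring
  have hint : ∀ m, Integrable (f m) μ :=
    fun m => hg.mono' (hf m).aestronglyMeasurable
      (ae_of_all _ fun x => by simpa [Real.norm_eq_abs] using hdom m x)
  set h : ℕ → Ω → ℝ := fun j x => (∑ m ∈ B j, s m * f m x) / (j + 1) with hhdef
  have hjpos : ∀ j : ℕ, (0:ℝ) < (j:ℝ) + 1 := fun j => by positivity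
  -- integral of h j is at least ε
  have hinth : ∀ j, ε ≤ ∫ x, h j x ∂μ := by
    intro j
    have h1 : ∫ x, h j x ∂μ = (∑ m ∈ B j, s m * ∫ y, f m y ∂μ) / (j + 1) := by
      simp only [hhdef]
      rw [integral_div, integral_finset_sum _ (fun m _ => (hint m).const_mul (s m))]
      congr 1
      exact Finset.sum_congr rfl fun m _ => integral_const_mul _ _
    rw [h1, le_div_iff₀ (hjpos j)]
    have h2 : (B j).card • ε ≤ ∑ m ∈ B j, s m * ∫ y, f m y ∂μ := by
      refine Finset.card_nsmul_le_sum _ _ _ fun m hm => ?_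
      rw [hsint]
      exact (hBsub j hm).2
    rw [hBcard j, nsmul_eq_mul] at h2
    calc ε * ((j:ℝ) + 1) = ((j:ℝ) + 1) * ε := by ring
    _ = ((j+1 : ℕ) : ℝ) * ε := by push_cast; ring
    _ ≤ _ := h2
  -- pointwise bound by g
  have hbound : ∀ j x, |h j x| ≤ g x := by
    intro j x
    have h1 : |∑ m ∈ B j, s m * f m x| ≤ ((j:ℝ) + 1) * g x := by
      calc |∑ m ∈ B j, s m * f m x| ≤ ∑ m ∈ B j, |s m * f m x| :=
            Finset.abs_sum_le_sum_abs _ _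
      _ ≤ ∑ m ∈ B j, g x := by
            refine Finset.sum_le_sum fun m _ => ?_
            rw [abs_mul, hsabs, one_mul]
            exact hdom m x
      _ = ((j:ℝ) + 1) * g x := by
            rw [Finset.sum_const, hBcard j, nsmul_eq_mul]; push_cast; ring
    simp only [hhdef]
    rw [abs_div, abs_of_pos (hjpos j), div_le_iff₀ (hjpos j)]
    calc |∑ m ∈ B j, s m * f m x| ≤ ((j:ℝ) + 1) * g x := h1
    _ = g x * ((j:ℝ) + 1) := by ring
  -- pointwise convergence of h · x to 0
  have hlim : ∀ x, Tendsto (fun j => h j x) atTop (nhds 0) := by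
    intro x
    rw [NormedAddCommGroup.tendsto_nhds_zero]
    intro ε' hε'
    obtain ⟨K, hK⟩ := hpt x (ε' / 2) (by positivity)
    have key : ∀ j, |h j x| ≤ ε' / 2 + (K * g x) / ((j:ℝ) + 1) := by
      intro j
      set bad : Finset ℕ := (B j).filter (fun m => ε' / 2 ≤ |f m x|) with hbad
      have hbadcard : (bad.card : ℝ) ≤ K := by
        have hsub : (bad : Set ℕ) ⊆ A (n j) ∩ {m | ε' / 2 ≤ |f m x|} := by
          intro m hm
          simp only [hbad, Finset.coe_filter, Set.mem_setOf_eq] at hm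
          exact ⟨(hBsub j hm.1).1, hm.2⟩
        have := (Set.encard_mono hsub).trans (hK (n j))
        rw [Set.encard_coe_eq_coe_finsetCard] at this
        exact_mod_cast this
      have hsum : |∑ m ∈ B j, s m * f m x| ≤ (K : ℝ) * g x + ((j:ℝ) + 1) * (ε' / 2) := by
        calc |∑ m ∈ B j, s m * f m x| ≤ ∑ m ∈ B j, |s m * f m x| :=
              Finset.abs_sum_le_sum_abs _ _
        _ = ∑ m ∈ B j, |f m x| := by
              refine Finset.sum_congr rfl fun m _ => ?_
              rw [abs_mul, hsabs, one_mul]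
        _ = ∑ m ∈ bad, |f m x| + ∑ m ∈ (B j).filter (fun m => ¬ ε' / 2 ≤ |f m x|), |f m x| :=
              (Finset.sum_filter_add_sum_filter_not _ _ _).symm
        _ ≤ (K : ℝ) * g x + ((j:ℝ) + 1) * (ε' / 2) := by
              gcongr ?_ + ?_
              · calc ∑ m ∈ bad, |f m x| ≤ ∑ m ∈ bad, g x :=
                      Finset.sum_le_sum fun m _ => hdom m x
                _ = (bad.card : ℝ) * g x := by rw [Finset.sum_const, nsmul_eq_mul]
                _ ≤ (K : ℝ) * g x := by
                      exact mul_le_mul_of_nonneg_right hbadcard (hg0 x)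
              · calc ∑ m ∈ (B j).filter (fun m => ¬ ε' / 2 ≤ |f m x|), |f m x|
                    ≤ ∑ m ∈ (B j).filter (fun m => ¬ ε' / 2 ≤ |f m x|), ε' / 2 := by
                      refine Finset.sum_le_sum fun m hm => ?_
                      have := (Finset.mem_filter.1 hm).2
                      linarith [lt_of_not_ge (fun hc => this hc)]
                _ = ((Finset.filter (fun m => ¬ ε' / 2 ≤ |f m x|) (B j)).card : ℝ) * (ε' / 2) := by
                      rw [Finset.sum_const, nsmul_eq_mul]
                _ ≤ ((j:ℝ) + 1) * (ε' / 2) := by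
                      refine mul_le_mul_of_nonneg_right ?_ (by positivity)
                      have := Finset.card_filter_le (B j) (fun m => ¬ ε' / 2 ≤ |f m x|)
                      rw [hBcard j] at this
                      push_cast
                      exact_mod_cast this
      simp only [hhdef]
      rw [abs_div, abs_of_pos (hjpos j), div_le_iff₀ (hjpos j)]
      calc |∑ m ∈ B j, s m * f m x| ≤ (K : ℝ) * g x + ((j:ℝ) + 1) * (ε' / 2) := hsum
      _ = (ε' / 2 + (K * g x) / ((j:ℝ) + 1)) * ((j:ℝ) + 1) := by
            field_simp
            ring
    have htend : Tendsto (fun j : ℕ => ε' / 2 + (K * g x) / ((j:ℝ) + 1)) atTop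
        (nhds (ε' / 2 + 0)) := by
      refine tendsto_const_nhds.add ?_
      exact tendsto_const_nhds.div_atTop
        (tendsto_atTop_add_const_right _ 1 tendsto_natCast_atTop_atTop)
    rw [add_zero] at htend
    filter_upwards [htend.eventually_lt_const (by linarith : ε' / 2 < ε')] with j hj
    calc ‖h j x‖ = |h j x| := rfl
    _ ≤ ε' / 2 + (K * g x) / ((j:ℝ) + 1) := key j
    _ < ε' := hj
  -- dominated convergence
  have hmeas : ∀ j, AEStronglyMeasurable (h j) μ := by
    intro j
    have : Measurable (h j) := by
      simp only [hhdef]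
      exact (Finset.measurable_sum (B j) (fun m _ => (hf m).const_mul (s m))).div_const _
    exact this.aestronglyMeasurable
  have hdct : Tendsto (fun j => ∫ x, h j x ∂μ) atTop (nhds 0) := by
    have := tendsto_integral_of_dominated_convergence g hmeas hg
      (fun j => ae_of_all _ fun x => by simpa [Real.norm_eq_abs] using hbound j x)
      (ae_of_all _ hlim)
    simpa using this
  have := ge_of_tendsto' hdct hinth
  linarith
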